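/- Let τ = {nop, inp, free} or τ = {nop, inp, used, free}. An initialized TS A that is a simple directed path s₀ --e₁--> s₁ --e₂--> ⋯ --eₙ--> sₙ on pairwise distinct states s₀, …, sₙ is τ-solvable (has both the τ-SSP and the τ-ESSP) if and only if the events e₁, …, eₙ are pairwise distinct. -/

import Mathlib

/-- The eight Boolean interactions. -/
inductive Interaction : Type
  | nop | inp | out | set | res | swap | used | free
  deriving DecidableEq

/-- An interaction as a partial function on `Bool` (`0 = false`, `1 = true`). -/
def Interaction.app : Interaction → Bool → Option Bool
  | .nop, x => some x
  | .inp, x => if x then some false else none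
  | .out, x => if x then none else some true
  | .set, _ => some true
  | .res, _ => some false
  | .swap, x => some (!x)
  | .used, x => if x then some true else none
  | .free, x => if x then none else some false

/-- A transition system with states `S`, events `E` and a partial transition function. -/
structure TS (S E : Type) where
  delta : S → E → Option S

/-- The one-step reachability relation of a TS. -/
def TS.step {S E : Type} (A : TS S E) (s s' : S) : Prop :=
  ∃ e, A.delta s e = some s'

/-- A `τ`-region of a TS `A`. -/
structure Region {S E : Type} (A : TS S E) (τ : Set Interaction) where
  sup : S → Bool
  sig : E → Interaction
  sig_mem : ∀ e, sig e ∈ τ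
  consistent : ∀ s e s', A.delta s e = some s' → (sig e).app (sup s) = some (sup s')

/-- `A` has the `τ`-state-separation property. -/
def TS.hasSSP {S E : Type} (A : TS S E) (τ : Set Interaction) : Prop :=
  ∀ s s' : S, s ≠ s' → ∃ R : Region A τ, R.sup s ≠ R.sup s'

/-- `A` has the `τ`-event-state-separation property. -/
def TS.hasESSP {S E : Type} (A : TS S E) (τ : Set Interaction) : Prop :=
  ∀ (e : E) (s : S), A.delta s e = none → ∃ R : Region A τ, (R.sig e).app (R.sup s) = none

/-- A TS together with an initial state. -/
structure InitTS (S E : Type) extends TS S E where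
  init : S

/-- The TS that is a simple directed path `s₀ --f 0--> s₁ --f 1--> ⋯ --f (n-1)--> sₙ`
on the pairwise distinct states `0, …, n : Fin (n+1)`, with initial state `0`. -/
def pathTS {E : Type} [DecidableEq E] (n : ℕ) (f : Fin n → E) : InitTS (Fin (n + 1)) E where
  delta := fun s a =>
    if h : ∃ j : Fin n, (j : ℕ) = (s : ℕ) ∧ f j = a then
      some ⟨(s : ℕ) + 1, by
        obtain ⟨j, hj, -⟩ := h
        have := j.isLt
        omega⟩
    else none
  init := 0

section Aux

variable {E : Type} [DecidableEq E]

lemma pathTS_delta_some_iff (n : ℕ) (f : Fin n → E) (s : Fin (n+1)) (a : E) (s' : Fin (n+1)) :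
    (pathTS n f).delta s a = some s' ↔
      ∃ j : Fin n, (j : ℕ) = (s : ℕ) ∧ f j = a ∧ (s' : ℕ) = (s : ℕ) + 1 := by
  show (if h : ∃ j : Fin n, (j:ℕ) = (s:ℕ) ∧ f j = a then some (⟨(s:ℕ)+1, _⟩ : Fin (n+1))
        else none) = some s' ↔ _
  split
  · rename_i h
    simp only [Option.some_inj]
    constructor
    · rintro rfl
      obtain ⟨j, hj, hfj⟩ := h
      exact ⟨j, hj, hfj, rfl⟩
    · rintro ⟨j, hj, hfj, hs'⟩
      exact (Fin.ext hs').symm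
  · rename_i h
    simp only [reduceCtorEq, false_iff]
    rintro ⟨j, hj, hfj, -⟩
    exact h ⟨j, hj, hfj⟩

lemma pathTS_delta_step (n : ℕ) (f : Fin n → E) (j : Fin n) :
    (pathTS n f).delta ⟨(j : ℕ), by omega⟩ (f j) = some ⟨(j : ℕ) + 1, by omega⟩ := by
  rw [pathTS_delta_some_iff]
  exact ⟨j, rfl, rfl, rfl⟩

lemma pathTS_delta_none_iff (n : ℕ) (f : Fin n → E) (s : Fin (n+1)) (a : E) :
    (pathTS n f).delta s a = none ↔ ¬ ∃ j : Fin n, (j : ℕ) = (s : ℕ) ∧ f j = a := by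
  show (if h : ∃ j : Fin n, (j:ℕ) = (s:ℕ) ∧ f j = a then some (⟨(s:ℕ)+1, _⟩ : Fin (n+1))
        else none) = none ↔ _
  split <;> rename_i h <;> simp [h]

lemma tau_subset {τ : Set Interaction}
    (hτ : τ = ({Interaction.nop, Interaction.inp, Interaction.free} : Set Interaction) ∨
          τ = ({Interaction.nop, Interaction.inp, Interaction.used, Interaction.free} :
            Set Interaction)) :
    ∀ i ∈ τ, i = Interaction.nop ∨ i = Interaction.inp ∨ i = Interaction.used ∨
      i = Interaction.free := by
  rcases hτ with rfl | rfl <;> intro i hi <;> simp only [Set.mem_insert_iff,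
    Set.mem_singleton_iff] at hi <;> tauto

/-- Along the path, the support of a region over a `nop/inp/used/free` type is
non-increasing. -/
lemma sup_antitone {τ : Set Interaction}
    (hτ : τ = ({Interaction.nop, Interaction.inp, Interaction.free} : Set Interaction) ∨
          τ = ({Interaction.nop, Interaction.inp, Interaction.used, Interaction.free} :
            Set Interaction))
    (n : ℕ) (f : Fin n → E) (R : Region (pathTS n f).toTS τ) :
    ∀ d i : ℕ, (h : i + d ≤ n) →
      R.sup ⟨i + d, by omega⟩ = true → R.sup ⟨i, by omega⟩ = true := by
  intro d
  induction d with
  | zero => intro i h hs; exact hs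
  | succ d ih =>
      intro i h hs
      apply ih i (by omega)
      -- one step back: from sup ⟨i+d+1⟩ = true deduce sup ⟨i+d⟩ = true
      have htr := R.consistent _ _ _ (pathTS_delta_step n f ⟨i + d, by omega⟩)
      have hmem := tau_subset hτ _ (R.sig_mem (f ⟨i + d, by omega⟩))
      have hs' : R.sup ⟨i + d + 1, by omega⟩ = true := hs
      rw [hs'] at htr
      rcases hmem with h1 | h1 | h1 | h1 <;> rw [h1] at htr <;>
        rcases hb : R.sup ⟨i + d, by omega⟩ <;>
        simp [Interaction.app, hb] at htr ⊢

/-- The region with support `{0, …, k}` and signature `inp` on `f k`, `nop` elsewhere. -/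
def sspRegion {E : Type} [DecidableEq E] {τ : Set Interaction}
    (hτ : τ = ({Interaction.nop, Interaction.inp, Interaction.free} : Set Interaction) ∨
          τ = ({Interaction.nop, Interaction.inp, Interaction.used, Interaction.free} :
            Set Interaction))
    {n : ℕ} {f : Fin n → E} (hf : Function.Injective f) (k : Fin n) :
    Region (pathTS n f).toTS τ where
  sup t := decide ((t : ℕ) ≤ (k : ℕ))
  sig e := if e = f k then .inp else .nop
  sig_mem e := by split <;> rcases hτ with rfl | rfl <;> simp
  consistent s e s' h := by
    rw [pathTS_delta_some_iff] at h
    obtain ⟨j, hj, hfj, hs'⟩ := h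
    by_cases he : e = f k
    · have hjk : j = k := hf (by rw [hfj, he])
      simp only [he, if_pos rfl, Interaction.app]
      have h1 : (s : ℕ) ≤ (k : ℕ) := by omega
      have h2 : ¬ ((s' : ℕ) ≤ (k : ℕ)) := by omega
      simp [h1, h2]
    · have hjk : (j : ℕ) ≠ (k : ℕ) := fun h => he (by rw [← hfj, Fin.ext h])
      simp only [if_neg he, Interaction.app, Option.some_inj, decide_eq_decide]
      omega

end Aux

/-- For `τ = {nop, inp, free}` or `τ = {nop, inp, used, free}`, a simple
directed path TS is `τ`-solvable (has the `τ`-SSP and the `τ`-ESSP) if and only if its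
events are pairwise distinct. -/
theorem path_solvable_iff_distinct_events {E : Type} [DecidableEq E]
    (τ : Set Interaction)
    (hτ : τ = ({Interaction.nop, Interaction.inp, Interaction.free} : Set Interaction) ∨
          τ = ({Interaction.nop, Interaction.inp, Interaction.used, Interaction.free} :
            Set Interaction))
    (n : ℕ) (f : Fin n → E) :
    ((pathTS n f).toTS.hasSSP τ ∧ (pathTS n f).toTS.hasESSP τ) ↔ Function.Injective f := by
  constructor
  · rintro ⟨hSSP, -⟩
    suffices key : ∀ i j : Fin n, f i = f j → (i : ℕ) < (j : ℕ) → False by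
      intro i j hfij
      by_contra hne
      rcases Nat.lt_or_ge (i : ℕ) (j : ℕ) with h | h
      · exact key i j hfij h
      · exact key j i hfij.symm
          (by rcases Nat.lt_or_ge (j : ℕ) (i : ℕ) with h' | h'
              · exact h'
              · exact absurd (Fin.ext (by omega)) hne)
    intro i j hfij hij
    -- separate states i and i+1
    obtain ⟨R, hR⟩ := hSSP ⟨(i : ℕ), by omega⟩ ⟨(i : ℕ) + 1, by omega⟩
      (by simp [Fin.ext_iff])
    have htr := R.consistent _ _ _ (pathTS_delta_step n f i)
    have hmem := tau_subset hτ _ (R.sig_mem (f i))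
    -- the signature of f i must be inp, with sup i = true, sup (i+1) = false
    have hkey : R.sig (f i) = Interaction.inp ∧
        R.sup ⟨(i : ℕ) + 1, by omega⟩ = false := by
      rcases hb : R.sup ⟨(i : ℕ), by omega⟩ <;>
        rcases hb' : R.sup ⟨(i : ℕ) + 1, by omega⟩ <;>
        rw [hb, hb'] at hR htr <;>
        rcases hmem with h1 | h1 | h1 | h1 <;>
        rw [h1] at htr <;> simp_all [Interaction.app]
    obtain ⟨hsig, hsup1⟩ := hkey
    -- hence sup j = false by antitonicity
    have hsupj : R.sup ⟨(j : ℕ), by omega⟩ = false := by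
      by_contra h
      have h' : R.sup ⟨(j : ℕ), by omega⟩ = true := by
        rcases h'' : R.sup ⟨(j : ℕ), by omega⟩ <;> simp_all
      have heq : (⟨(i : ℕ) + 1 + ((j : ℕ) - ((i : ℕ) + 1)), by omega⟩ : Fin (n+1)) =
          ⟨(j : ℕ), by omega⟩ := Fin.ext (by simp; omega)
      have := sup_antitone hτ n f R ((j : ℕ) - ((i : ℕ) + 1)) ((i : ℕ) + 1) (by omega)
        (by rw [heq]; exact h')
      rw [hsup1] at this
      exact Bool.false_ne_true this
    -- but f j = f i occurs at j, and inp is undefined at false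
    have htrj := R.consistent _ _ _ (pathTS_delta_step n f j)
    rw [← hfij, hsig, hsupj] at htrj
    simp [Interaction.app] at htrj
  · intro hf
    constructor
    · -- SSP
      have key : ∀ s s' : Fin (n + 1), (s : ℕ) < (s' : ℕ) →
          ∃ R : Region (pathTS n f).toTS τ, R.sup s ≠ R.sup s' := by
        intro s s' hlt
        have hsn : (s : ℕ) < n := by have := s'.isLt; omega
        refine ⟨sspRegion hτ hf ⟨(s : ℕ), hsn⟩, ?_⟩
        simp only [sspRegion]
        have h1 : (s : ℕ) ≤ (s : ℕ) := le_refl _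
        have h2 : ¬ ((s' : ℕ) ≤ (s : ℕ)) := by omega
        simp [h1, h2]
      intro s s' hne
      rcases Nat.lt_or_ge (s : ℕ) (s' : ℕ) with h | h
      · exact key s s' h
      · have h' : (s' : ℕ) < (s : ℕ) := by
          rcases Nat.lt_or_ge (s' : ℕ) (s : ℕ) with h' | h'
          · exact h'
          · exact absurd (Fin.ext (by omega)) hne
        obtain ⟨R, hR⟩ := key s' s h'
        exact ⟨R, Ne.symm hR⟩
    · -- ESSP
      intro e s hnone
      rw [pathTS_delta_none_iff] at hnone
      by_cases hex : ∃ k : Fin n, f k = e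
      · obtain ⟨k, hk⟩ := hex
        have hsk : (s : ℕ) ≠ (k : ℕ) := fun h => hnone ⟨k, h.symm, hk⟩
        rcases Nat.lt_or_gt_of_ne hsk with hlt | hgt
        · -- s < k : region with support {0, …, k-1}, signature free on e
          refine ⟨⟨fun t => decide ((t : ℕ) < (k : ℕ)),
            fun e' => if e' = e then .free else
              if ∃ j' : Fin n, f j' = e' ∧ (j' : ℕ) + 1 = (k : ℕ) then .inp else .nop,
            ?_, ?_⟩, ?_⟩
          · intro e'
            split
            · rcases hτ with rfl | rfl <;> simp
            split <;> rcases hτ with rfl | rfl <;> simp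
          · intro t a t' h
            rw [pathTS_delta_some_iff] at h
            obtain ⟨j, hj, hfj, ht'⟩ := h
            by_cases ha : a = e
            · have hjk : j = k := hf (by rw [hfj, ha, hk])
              rw [if_pos ha]
              have h1 : ¬ ((t : ℕ) < (k : ℕ)) := by omega
              have h2 : ¬ ((t' : ℕ) < (k : ℕ)) := by omega
              simp [Interaction.app, h1, h2]
            · rw [if_neg ha]
              have hjk : (j : ℕ) ≠ (k : ℕ) := fun h => ha (by rw [← hfj, Fin.ext h, hk])
              by_cases hb : ∃ j' : Fin n, f j' = a ∧ (j' : ℕ) + 1 = (k : ℕ)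
              · obtain ⟨j', hj'a, hj'k⟩ := hb
                have hj'j : j' = j := hf (by rw [hj'a, hfj])
                rw [if_pos ⟨j', hj'a, hj'k⟩]
                have h1 : (t : ℕ) < (k : ℕ) := by omega
                have h2 : ¬ ((t' : ℕ) < (k : ℕ)) := by omega
                simp [Interaction.app, h1, h2]
              · rw [if_neg hb]
                have hjk1 : (j : ℕ) + 1 ≠ (k : ℕ) := fun h => hb ⟨j, hfj, h⟩
                simp only [Interaction.app, Option.some_inj, decide_eq_decide]
                omega
          · have h1 : (s : ℕ) < (k : ℕ) := hlt
            simp [Interaction.app, h1]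
        · -- s > k : the region sspRegion k works
          refine ⟨sspRegion hτ hf k, ?_⟩
          simp only [sspRegion]
          rw [← hk, if_pos rfl]
          have h1 : ¬ ((s : ℕ) ≤ (k : ℕ)) := by omega
          simp [Interaction.app, h1]
      · -- e does not occur anywhere: constant-false support, signature inp on e
        refine ⟨⟨fun _ => false, fun e' => if e' = e then .inp else .nop, ?_, ?_⟩, ?_⟩
        · intro e'
          split <;> rcases hτ with rfl | rfl <;> simp
        · intro t a t' h
          rw [pathTS_delta_some_iff] at h
          obtain ⟨j, hj, hfj, ht'⟩ := h
          have ha : a ≠ e := fun h => hex ⟨j, by rw [hfj, h]⟩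
          rw [if_neg ha]
          simp [Interaction.app]
        · simp [Interaction.app]
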